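/- Satisfiability of 'interesting' formulas reduces to first-order satisfiability: define the class of interesting formulas inductively by (i) every first-order formula is interesting, (ii) if F₁ and F₂ are interesting then F₁ ⋆ F₂ is interesting, and (iii) if F₁ and F₂ are interesting then F₁ ∨ F₂ is interesting. Then for every interesting formula F there is a first-order formula F̂ in an extended vocabulary (obtained by recursively replacing each subformula G₁ ⋆ G₂ with btr(G₁ ⋆ G₂) using fresh primed copies of the predicate symbols) such that F is satisfiable iff F̂ is satisfiable. -/

import Mathlib

/-- An environment (model with variable assignment): interprets unary predicate
symbols from `𝒜`, binary predicate symbols from `ℱ`, and variables from `V`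
over the domain `D`. -/
structure Env (𝒜 ℱ V D : Type) where
  un : 𝒜 → D → Prop
  bin : ℱ → D → D → Prop
  var : V → D

variable {𝒜 ℱ V D : Type}

/-- `e.Split e₁ e₂`: the relations of `e` split as a disjoint union into `e₁`
and `e₂`, and the variable assignments agree with those of `e`. -/
def Env.Split (e e₁ e₂ : Env 𝒜 ℱ V D) : Prop :=
  e₁.var = e.var ∧ e₂.var = e.var ∧
  (∀ A d, (e.un A d ↔ (e₁.un A d ∨ e₂.un A d)) ∧ ¬(e₁.un A d ∧ e₂.un A d)) ∧
  (∀ f d₁ d₂, (e.bin f d₁ d₂ ↔ (e₁.bin f d₁ d₂ ∨ e₂.bin f d₁ d₂)) ∧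
      ¬(e₁.bin f d₁ d₂ ∧ e₂.bin f d₁ d₂))

/-- Spatial conjunction of predicates on environments. -/
def spand (P Q : Env 𝒜 ℱ V D → Prop) (e : Env 𝒜 ℱ V D) : Prop :=
  ∃ e₁ e₂, e.Split e₁ e₂ ∧ P e₁ ∧ Q e₂

/-! ## Syntax and semantics of first-order logic with counting quantifiers -/

/-- Counting quantifier specifications: `∃^{=k}` and `∃^{≥k}`. -/
inductive CQ : Type where
  | exact : ℕ → CQ
  | atLeast : ℕ → CQ
deriving DecidableEq

/-- A counting quantifier specification is satisfied by a cardinality `c`. -/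
def CQ.sat : CQ → ℕ → Prop
  | .exact k, c => c = k
  | .atLeast k, c => k ≤ c

/-- `c ∈ C_{k+1}`: `c` is `=i` for some `i ≤ k`, or `≥ k+1`. -/
def CQ.degLE (k : ℕ) : CQ → Prop
  | .exact i => i ≤ k
  | .atLeast i => i = k + 1

/-- Formulas of first-order predicate calculus with equality and counting
quantifiers, over unary symbols `𝒜`, binary symbols `ℱ`, variables `V`. -/
inductive Fml (𝒜 ℱ V : Type) : Type where
  | un : 𝒜 → V → Fml 𝒜 ℱ V
  | bin : ℱ → V → V → Fml 𝒜 ℱ V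
  | eq : V → V → Fml 𝒜 ℱ V
  | fls : Fml 𝒜 ℱ V
  | and : Fml 𝒜 ℱ V → Fml 𝒜 ℱ V → Fml 𝒜 ℱ V
  | or : Fml 𝒜 ℱ V → Fml 𝒜 ℱ V → Fml 𝒜 ℱ V
  | not : Fml 𝒜 ℱ V → Fml 𝒜 ℱ V
  | cnt : CQ → V → Fml 𝒜 ℱ V → Fml 𝒜 ℱ V

/-- Update the value of a variable in an environment. -/
def Env.updVar [DecidableEq V] (e : Env 𝒜 ℱ V D) (v : V) (d : D) : Env 𝒜 ℱ V D :=
  { e with var := Function.update e.var v d }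

/-- Satisfaction of a formula in an environment. -/
def Fml.Sat [DecidableEq V] : Fml 𝒜 ℱ V → Env 𝒜 ℱ V D → Prop
  | .un A v, e => e.un A (e.var v)
  | .bin f v w, e => e.bin f (e.var v) (e.var w)
  | .eq v w, e => e.var v = e.var w
  | .fls, _ => False
  | .and F G, e => F.Sat e ∧ G.Sat e
  | .or F G, e => F.Sat e ∨ G.Sat e
  | .not F, e => ¬ F.Sat e
  | .cnt c v F, e => c.sat {d : D | F.Sat (e.updVar v d)}.ncard

/-- Quantifier depth; each counting quantifier counts as one quantifier. -/
def Fml.qdepth : Fml 𝒜 ℱ V → ℕ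
  | .un _ _ => 0
  | .bin _ _ _ => 0
  | .eq _ _ => 0
  | .fls => 0
  | .and F G => max F.qdepth G.qdepth
  | .or F G => max F.qdepth G.qdepth
  | .not F => F.qdepth
  | .cnt _ _ F => F.qdepth + 1

/-- Free variables of a formula. -/
def Fml.fv [DecidableEq V] : Fml 𝒜 ℱ V → Finset V
  | .un _ v => {v}
  | .bin _ v w => {v, w}
  | .eq v w => {v, w}
  | .fls => ∅
  | .and F G => F.fv ∪ G.fv
  | .or F G => F.fv ∪ G.fv
  | .not F => F.fv
  | .cnt _ v F => F.fv.erase v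

/-- `F.DegLE k`: `F` has counting degree at most `k`, i.e. all counting
quantifiers of `F` are `∃^c` with `c ∈ C_{k+1}`. -/
def Fml.DegLE (k : ℕ) : Fml 𝒜 ℱ V → Prop
  | .un _ _ => True
  | .bin _ _ _ => True
  | .eq _ _ => True
  | .fls => True
  | .and F G => F.DegLE k ∧ G.DegLE k
  | .or F G => F.DegLE k ∧ G.DegLE k
  | .not F => F.DegLE k
  | .cnt c _ F => c.degLE k ∧ F.DegLE k

/-! ## Atomic formulas, complete atomic types -/

/-- Atomic formulas over unary symbols `𝒜`, binary symbols `ℱ`, variables `V`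
(including equality atoms). -/
inductive Atom (𝒜 ℱ V : Type) : Type where
  | un : 𝒜 → V → Atom 𝒜 ℱ V
  | bin : ℱ → V → V → Atom 𝒜 ℱ V
  | eq : V → V → Atom 𝒜 ℱ V
deriving DecidableEq

def Atom.toFml : Atom 𝒜 ℱ V → Fml 𝒜 ℱ V
  | .un A v => .un A v
  | .bin f v w => .bin f v w
  | .eq v w => .eq v w

/-- The variables occurring in an atomic formula. -/
def Atom.varset [DecidableEq V] : Atom 𝒜 ℱ V → Finset V
  | .un _ v => {v}
  | .bin _ v w => {v, w}
  | .eq v w => {v, w}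

/-- Whether an atom is an equality atom. -/
def Atom.isEq : Atom 𝒜 ℱ V → Bool
  | .eq _ _ => true
  | _ => false

def atomEquiv (𝒜 ℱ V : Type) :
    Atom 𝒜 ℱ V ≃ ((𝒜 × V) ⊕ ((ℱ × V × V) ⊕ (V × V))) where
  toFun a := match a with
    | .un A v => Sum.inl (A, v)
    | .bin f v w => Sum.inr (Sum.inl (f, v, w))
    | .eq v w => Sum.inr (Sum.inr (v, w))
  invFun s := match s with
    | Sum.inl (A, v) => .un A v
    | Sum.inr (Sum.inl (f, v, w)) => .bin f v w
    | Sum.inr (Sum.inr (v, w)) => .eq v w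
  left_inv a := by cases a <;> rfl
  right_inv s := by rcases s with ⟨A, v⟩ | ⟨f, v, w⟩ | ⟨v, w⟩ <;> rfl

instance [Fintype 𝒜] [Fintype ℱ] [Fintype V] : Fintype (Atom 𝒜 ℱ V) :=
  Fintype.ofEquiv _ (atomEquiv 𝒜 ℱ V).symm

/-- Conjunction of a list of formulas (empty conjunction is `¬⊥`, i.e. true). -/
def listConj (l : List (Fml 𝒜 ℱ V)) : Fml 𝒜 ℱ V := l.foldr .and (.not .fls)

/-- Disjunction of a list of formulas (empty disjunction is `⊥`). -/
def listDisj (l : List (Fml 𝒜 ℱ V)) : Fml 𝒜 ℱ V := l.foldr .or .fls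

/-- Conjunction of a list of atoms, each taken positively or negatively
according to the sign assignment `σ`. -/
def signedConj (l : List (Atom 𝒜 ℱ V)) (σ : Atom 𝒜 ℱ V → Bool) : Fml 𝒜 ℱ V :=
  listConj (l.map fun a => if σ a then a.toFml else .not a.toFml)

/-- Rename the predicate symbols of a formula. -/
def Fml.mapSym {𝒜 ℱ 𝒜' ℱ' V : Type} (fA : 𝒜 → 𝒜') (fF : ℱ → ℱ') :
    Fml 𝒜 ℱ V → Fml 𝒜' ℱ' V
  | .un A v => .un (fA A) v
  | .bin f v w => .bin (fF f) v w
  | .eq v w => .eq v w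
  | .fls => .fls
  | .and F G => .and (F.mapSym fA fF) (G.mapSym fA fF)
  | .or F G => .or (F.mapSym fA fF) (G.mapSym fA fF)
  | .not F => .not (F.mapSym fA fF)
  | .cnt c v F => .cnt c v (F.mapSym fA fF)

/-- Universal quantification, encoded as `∃^{=0} v. ¬F`. -/
def Fml.all (v : V) (F : Fml 𝒜 ℱ V) : Fml 𝒜 ℱ V := .cnt (.exact 0) v (.not F)

/-- Biimplication of formulas. -/
def Fml.iff (F G : Fml 𝒜 ℱ V) : Fml 𝒜 ℱ V :=
  (F.and G).or ((Fml.not F).and (Fml.not G))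

/-- `Split₁(A, A′, A″) ≡ ∀x. (A(x) ↔ (A′(x) ∨ A″(x))) ∧ ¬(A′(x) ∧ A″(x))`.
Variables are natural numbers; `x` is the variable `0`. -/
def split1Fml {𝒜 ℱ : Type} (A A' A'' : 𝒜) : Fml 𝒜 ℱ ℕ :=
  Fml.all 0 <|
    ((Fml.un A 0).iff ((Fml.un A' 0).or (Fml.un A'' 0))).and
      (.not ((Fml.un A' 0).and (Fml.un A'' 0)))

/-- `Split₂(f, f′, f″) ≡
∀x y. (f(x,y) ↔ (f′(x,y) ∨ f″(x,y))) ∧ ¬(f′(x,y) ∧ f″(x,y))`.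
`x`, `y` are the variables `0`, `1`. -/
def split2Fml {𝒜 ℱ : Type} (f f' f'' : ℱ) : Fml 𝒜 ℱ ℕ :=
  Fml.all 0 <| Fml.all 1 <|
    ((Fml.bin f 0 1).iff ((Fml.bin f' 0 1).or (Fml.bin f'' 0 1))).and
      (.not ((Fml.bin f' 0 1).and (Fml.bin f'' 0 1)))

/-- The class of "interesting" formulas: first-order formulas are
interesting, and the class is closed under spatial conjunction `⋆` and
disjunction `∨`. -/
inductive IFml (𝒜 ℱ V : Type) : Type where
  | fo : Fml 𝒜 ℱ V → IFml 𝒜 ℱ V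
  | star : IFml 𝒜 ℱ V → IFml 𝒜 ℱ V → IFml 𝒜 ℱ V
  | or : IFml 𝒜 ℱ V → IFml 𝒜 ℱ V → IFml 𝒜 ℱ V

/-- Satisfaction of interesting formulas; `star` is interpreted by splitting
the interpretations of all predicate symbols of the vocabulary as disjoint
unions. -/
def IFml.Sat {𝒜 ℱ V D : Type} [DecidableEq V] :
    IFml 𝒜 ℱ V → Env 𝒜 ℱ V D → Prop
  | .fo F, e => F.Sat e
  | .star F G, e => ∃ e₁ e₂, e.Split e₁ e₂ ∧ F.Sat e₁ ∧ G.Sat e₂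
  | .or F G, e => F.Sat e ∨ G.Sat e

/-- Tagged copies of the predicate symbols: the fresh primed copies introduced
by the recursive replacement of spatial conjunctions are addressed by a list
of booleans (`false` = left/primed copy, `true` = right/double-primed copy). -/
abbrev TSym (S : Type) : Type := S × List Bool

/-- The recursive translation of an interesting formula into a first-order
formula over the extended vocabulary of tagged symbols: each subformula
`G₁ ⋆ G₂` is replaced by `btr(G₁ ⋆ G₂)`, using fresh copies of the predicate
symbols for the two conjuncts. -/
noncomputable def hatAux {𝒜 ℱ : Type} [Fintype 𝒜] [Fintype ℱ]
    (t : List Bool) : IFml 𝒜 ℱ ℕ → Fml (TSym 𝒜) (TSym ℱ) ℕ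
  | .fo F => F.mapSym (fun A => (A, t)) (fun f => (f, t))
  | .or F G => (hatAux t F).or (hatAux t G)
  | .star F G =>
      (listConj ((Finset.univ : Finset 𝒜).toList.map fun A =>
          split1Fml (A, t) (A, t ++ [false]) (A, t ++ [true]))).and <|
      (listConj ((Finset.univ : Finset ℱ).toList.map fun f =>
          split2Fml (f, t) (f, t ++ [false]) (f, t ++ [true]))).and <|
      ((hatAux (t ++ [false]) F).and (hatAux (t ++ [true]) G))


/-! ## Auxiliary lemmas for the proof -/

section Aux

variable {𝒜 ℱ V D : Type}

lemma sat_listConj [DecidableEq V] (l : List (Fml 𝒜 ℱ V)) (e : Env 𝒜 ℱ V D) :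
    (listConj l).Sat e ↔ ∀ F ∈ l, F.Sat e := by
  induction l with
  | nil => simp [listConj, Fml.Sat]
  | cons F l ih =>
      simp only [listConj, List.foldr_cons, Fml.Sat, List.mem_cons] at *
      constructor
      · rintro ⟨h1, h2⟩ G (rfl | hG)
        · exact h1
        · exact ih.1 h2 G hG
      · intro h; exact ⟨h F (Or.inl rfl), ih.2 fun G hG => h G (Or.inr hG)⟩

lemma sat_all [DecidableEq V] [Finite D] (v : V) (F : Fml 𝒜 ℱ V) (e : Env 𝒜 ℱ V D) :
    (Fml.all v F).Sat e ↔ ∀ d, F.Sat (e.updVar v d) := by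
  simp only [Fml.all, Fml.Sat, CQ.sat]
  rw [Set.ncard_eq_zero (Set.toFinite _), Set.eq_empty_iff_forall_notMem]
  simp

lemma sat_iff [DecidableEq V] (F G : Fml 𝒜 ℱ V) (e : Env 𝒜 ℱ V D) :
    (Fml.iff F G).Sat e ↔ (F.Sat e ↔ G.Sat e) := by
  simp only [Fml.iff, Fml.Sat]; tauto

lemma sat_split1 [Finite D] (A A' A'' : 𝒜) (e : Env 𝒜 ℱ ℕ D) :
    (split1Fml A A' A'' : Fml 𝒜 ℱ ℕ).Sat e ↔
      ∀ d, (e.un A d ↔ (e.un A' d ∨ e.un A'' d)) ∧ ¬(e.un A' d ∧ e.un A'' d) := by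
  rw [split1Fml, sat_all]
  refine forall_congr' fun d => ?_
  simp only [Fml.Sat, sat_iff, Env.updVar, Function.update_self]

lemma sat_split2 [Finite D] (f f' f'' : ℱ) (e : Env 𝒜 ℱ ℕ D) :
    (split2Fml f f' f'' : Fml 𝒜 ℱ ℕ).Sat e ↔
      ∀ d₁ d₂, (e.bin f d₁ d₂ ↔ (e.bin f' d₁ d₂ ∨ e.bin f'' d₁ d₂)) ∧
        ¬(e.bin f' d₁ d₂ ∧ e.bin f'' d₁ d₂) := by
  rw [split2Fml, sat_all]
  refine forall_congr' fun d₁ => ?_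
  rw [sat_all]
  refine forall_congr' fun d₂ => ?_
  simp only [Fml.Sat, sat_iff, Env.updVar, Function.update_apply]
  norm_num

lemma sat_mapSym {𝒜' ℱ' : Type} [DecidableEq V] (fA : 𝒜 → 𝒜') (fF : ℱ → ℱ')
    (F : Fml 𝒜 ℱ V) (e : Env 𝒜' ℱ' V D) :
    (F.mapSym fA fF).Sat e ↔
      F.Sat ⟨fun A => e.un (fA A), fun f => e.bin (fF f), e.var⟩ := by
  induction F generalizing e with
  | cnt c v F ih =>
      simp only [Fml.mapSym, Fml.Sat]
      have h : {d : D | (F.mapSym fA fF).Sat (e.updVar v d)} =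
          {d : D | F.Sat ((⟨fun A => e.un (fA A), fun f => e.bin (fF f), e.var⟩ :
            Env 𝒜 ℱ V D).updVar v d)} := by
        ext d
        simp only [Set.mem_setOf_eq]
        exact ih (e.updVar v d)
      rw [h]
  | _ => simp [Fml.mapSym, Fml.Sat, *]

/-- All symbols occurring in a formula satisfy the given predicates. -/
def Fml.SymP {𝒜 ℱ V : Type} (PA : 𝒜 → Prop) (PF : ℱ → Prop) : Fml 𝒜 ℱ V → Prop
  | .un A _ => PA A
  | .bin f _ _ => PF f
  | .eq _ _ => True
  | .fls => True
  | .and F G => F.SymP PA PF ∧ G.SymP PA PF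
  | .or F G => F.SymP PA PF ∧ G.SymP PA PF
  | .not F => F.SymP PA PF
  | .cnt _ _ F => F.SymP PA PF

lemma symP_true [DecidableEq V] (F : Fml 𝒜 ℱ V) :
    F.SymP (fun _ => True) (fun _ => True) := by
  induction F <;> simp [Fml.SymP, *]

lemma symP_mono {PA QA : 𝒜 → Prop} {PF QF : ℱ → Prop} (hA : ∀ A, PA A → QA A)
    (hF : ∀ f, PF f → QF f) : ∀ {F : Fml 𝒜 ℱ V}, F.SymP PA PF → F.SymP QA QF := by
  intro F
  induction F with
  | un A v => exact fun h => hA A h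
  | bin f v w => exact fun h => hF f h
  | eq _ _ => exact id
  | fls => exact id
  | and F G ihF ihG => exact fun h => ⟨ihF h.1, ihG h.2⟩
  | or F G ihF ihG => exact fun h => ⟨ihF h.1, ihG h.2⟩
  | not F ih => exact ih
  | cnt c v F ih => exact ih

lemma symP_listConj {PA : 𝒜 → Prop} {PF : ℱ → Prop} {l : List (Fml 𝒜 ℱ V)}
    (h : ∀ F ∈ l, F.SymP PA PF) : (listConj l).SymP PA PF := by
  induction l with
  | nil => trivial
  | cons F l ih =>
      exact ⟨h F (List.mem_cons_self), ih fun G hG => h G (List.mem_cons_of_mem _ hG)⟩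

lemma symP_split1 {PA : 𝒜 → Prop} {PF : ℱ → Prop} {A A' A'' : 𝒜}
    (h : PA A) (h' : PA A') (h'' : PA A'') :
    (split1Fml A A' A'' : Fml 𝒜 ℱ ℕ).SymP PA PF := by
  simp [split1Fml, Fml.all, Fml.iff, Fml.SymP, h, h', h'']

lemma symP_split2 {PA : 𝒜 → Prop} {PF : ℱ → Prop} {f f' f'' : ℱ}
    (h : PF f) (h' : PF f') (h'' : PF f'') :
    (split2Fml f f' f'' : Fml 𝒜 ℱ ℕ).SymP PA PF := by
  simp [split2Fml, Fml.all, Fml.iff, Fml.SymP, h, h', h'']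

lemma symP_mapSym {𝒜' ℱ' : Type} {PA : 𝒜' → Prop} {PF : ℱ' → Prop}
    {fA : 𝒜 → 𝒜'} {fF : ℱ → ℱ'} (hA : ∀ A, PA (fA A)) (hF : ∀ f, PF (fF f)) :
    ∀ F : Fml 𝒜 ℱ V, (F.mapSym fA fF).SymP PA PF := by
  intro F
  induction F with
  | un A v => exact hA A
  | bin f v w => exact hF f
  | eq _ _ => trivial
  | fls => trivial
  | and F G ihF ihG => exact ⟨ihF, ihG⟩
  | or F G ihF ihG => exact ⟨ihF, ihG⟩
  | not F ih => exact ih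
  | cnt c v F ih => exact ih

lemma sat_congr [DecidableEq V] {PA : 𝒜 → Prop} {PF : ℱ → Prop} :
    ∀ {F : Fml 𝒜 ℱ V}, F.SymP PA PF → ∀ {e e' : Env 𝒜 ℱ V D},
      (∀ A, PA A → ∀ d, e.un A d ↔ e'.un A d) →
      (∀ f, PF f → ∀ d₁ d₂, e.bin f d₁ d₂ ↔ e'.bin f d₁ d₂) →
      e.var = e'.var → (F.Sat e ↔ F.Sat e') := by
  intro F
  induction F with
  | un A v =>
      intro h e e' hun hbin hvar
      simp only [Fml.Sat, hvar]
      exact hun A h _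
  | bin f v w =>
      intro h e e' hun hbin hvar
      simp only [Fml.Sat, hvar]
      exact hbin f h _ _
  | eq v w => intro _ e e' _ _ hvar; simp [Fml.Sat, hvar]
  | fls => intro _ _ _ _ _ _; simp [Fml.Sat]
  | and F G ihF ihG =>
      intro h e e' hun hbin hvar
      exact and_congr (ihF h.1 hun hbin hvar) (ihG h.2 hun hbin hvar)
  | or F G ihF ihG =>
      intro h e e' hun hbin hvar
      exact or_congr (ihF h.1 hun hbin hvar) (ihG h.2 hun hbin hvar)
  | not F ih =>
      intro h e e' hun hbin hvar
      exact not_congr (ih h hun hbin hvar)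
  | cnt c v F ih =>
      intro h e e' hun hbin hvar
      simp only [Fml.Sat]
      have hs : {d : D | F.Sat (e.updVar v d)} = {d : D | F.Sat (e'.updVar v d)} := by
        ext d
        simp only [Set.mem_setOf_eq]
        exact ih h (fun A hA d' => hun A hA d') (fun f hf d₁ d₂ => hbin f hf d₁ d₂)
          (by simp [Env.updVar, hvar])
      rw [hs]

lemma symP_hatAux [Fintype 𝒜] [Fintype ℱ] :
    ∀ (F : IFml 𝒜 ℱ ℕ) (t : List Bool),
      (hatAux t F).SymP (fun A : TSym 𝒜 => t <+: A.2) (fun f : TSym ℱ => t <+: f.2) := by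
  intro F
  induction F with
  | fo F =>
      intro t
      exact symP_mapSym (fA := fun A => (A, t)) (fF := fun f => (f, t))
        (fun A => List.prefix_refl t) (fun f => List.prefix_refl t) F
  | or F G ihF ihG => intro t; exact ⟨ihF t, ihG t⟩
  | star F G ihF ihG =>
      intro t
      refine ⟨symP_listConj ?_, symP_listConj ?_, ?_, ?_⟩
      · intro F' hF'
        obtain ⟨A, -, rfl⟩ := List.mem_map.1 hF'
        exact symP_split1 (List.prefix_refl t) (List.prefix_append t _) (List.prefix_append t _)
      · intro F' hF'
        obtain ⟨f, -, rfl⟩ := List.mem_map.1 hF'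
        exact symP_split2 (List.prefix_refl t) (List.prefix_append t _) (List.prefix_append t _)
      · exact symP_mono (fun A hA => (List.prefix_append t [false]).trans hA)
          (fun f hf => (List.prefix_append t [false]).trans hf) (ihF (t ++ [false]))
      · exact symP_mono (fun A hA => (List.prefix_append t [true]).trans hA)
          (fun f hf => (List.prefix_append t [true]).trans hf) (ihG (t ++ [true]))

/-- Restriction of an environment over the extended vocabulary to the symbols
with a fixed tag. -/
def projEnv (t : List Bool) (E : Env (TSym 𝒜) (TSym ℱ) ℕ D) : Env 𝒜 ℱ ℕ D :=
  ⟨fun A => E.un (A, t), fun f => E.bin (f, t), E.var⟩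

lemma hatAux_forward [Fintype 𝒜] [Fintype ℱ] [Finite D] :
    ∀ (F : IFml 𝒜 ℱ ℕ) (t : List Bool) (E : Env (TSym 𝒜) (TSym ℱ) ℕ D),
      (hatAux t F).Sat E → F.Sat (projEnv t E) := by
  intro F
  induction F with
  | fo F =>
      intro t E h
      exact (sat_mapSym _ _ _ _).1 h
  | or F G ihF ihG =>
      intro t E h
      exact h.imp (ihF t E) (ihG t E)
  | star F G ihF ihG =>
      intro t E h
      obtain ⟨h1, h2, hF, hG⟩ := h
      refine ⟨projEnv (t ++ [false]) E, projEnv (t ++ [true]) E, ⟨rfl, rfl, ?_, ?_⟩,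
        ihF _ _ hF, ihG _ _ hG⟩
      · intro A d
        have hm : (split1Fml (A, t) (A, t ++ [false]) (A, t ++ [true]) :
            Fml (TSym 𝒜) (TSym ℱ) ℕ) ∈
            (Finset.univ : Finset 𝒜).toList.map fun A =>
              split1Fml (A, t) (A, t ++ [false]) (A, t ++ [true]) :=
          List.mem_map_of_mem (by simp)
        exact (sat_split1 _ _ _ _).1 ((sat_listConj _ _).1 h1 _ hm) d
      · intro f d₁ d₂
        have hm : (split2Fml (f, t) (f, t ++ [false]) (f, t ++ [true]) :
            Fml (TSym 𝒜) (TSym ℱ) ℕ) ∈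
            (Finset.univ : Finset ℱ).toList.map fun f =>
              split2Fml (f, t) (f, t ++ [false]) (f, t ++ [true]) :=
          List.mem_map_of_mem (by simp)
        exact (sat_split2 _ _ _ _).1 ((sat_listConj _ _).1 h2 _ hm) d₁ d₂

lemma hatAux_backward [Fintype 𝒜] [Fintype ℱ] [Finite D] :
    ∀ (F : IFml 𝒜 ℱ ℕ) (t : List Bool) (e : Env 𝒜 ℱ ℕ D), F.Sat e →
      ∃ E : Env (TSym 𝒜) (TSym ℱ) ℕ D, E.var = e.var ∧
        (∀ A d, E.un (A, t) d ↔ e.un A d) ∧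
        (∀ f d₁ d₂, E.bin (f, t) d₁ d₂ ↔ e.bin f d₁ d₂) ∧
        (hatAux t F).Sat E := by
  intro F
  induction F with
  | fo F =>
      intro t e h
      refine ⟨⟨fun A d => A.2 = t ∧ e.un A.1 d,
        fun f d₁ d₂ => f.2 = t ∧ e.bin f.1 d₁ d₂, e.var⟩,
        rfl, by simp, by simp, ?_⟩
      rw [show hatAux t (IFml.fo F) =
        F.mapSym (fun A => (A, t)) (fun f => (f, t)) from rfl, sat_mapSym]
      refine (sat_congr (symP_true F) ?_ ?_ ?_).1 h
      · intro A _ d; simp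
      · intro f _ d₁ d₂; simp
      · rfl
  | or F G ihF ihG =>
      intro t e h
      cases h with
      | inl h =>
          obtain ⟨E, h1, h2, h3, h4⟩ := ihF t e h
          exact ⟨E, h1, h2, h3, Or.inl h4⟩
      | inr h =>
          obtain ⟨E, h1, h2, h3, h4⟩ := ihG t e h
          exact ⟨E, h1, h2, h3, Or.inr h4⟩
  | star F G ihF ihG =>
      intro t e h
      obtain ⟨e₁, e₂, ⟨hv1, hv2, hun12, hbin12⟩, h₁, h₂⟩ := h
      obtain ⟨E₁, hE₁v, hE₁un, hE₁bin, hE₁⟩ := ihF (t ++ [false]) e₁ h₁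
      obtain ⟨E₂, hE₂v, hE₂un, hE₂bin, hE₂⟩ := ihG (t ++ [true]) e₂ h₂
      have hne : ∀ (s : List Bool) (b b' : Bool), b ≠ b' →
          t ++ [b] <+: s → ¬(t ++ [b'] <+: s) := by
        rintro s b b' hbb ⟨u, hu⟩ ⟨u', hu'⟩
        have he : t ++ ([b] ++ u) = t ++ ([b'] ++ u') := by
          rw [← List.append_assoc, ← List.append_assoc, hu, hu']
        have := List.append_cancel_left he
        simp at this
        exact hbb this.1
      have hnt : ∀ b : Bool, ¬(t ++ [b] <+: t) := by
        intro b h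
        have := h.length_le
        simp at this
      refine ⟨⟨fun A d => ((t ++ [false]) <+: A.2 ∧ E₁.un A d) ∨
                    ((t ++ [true]) <+: A.2 ∧ E₂.un A d) ∨
                    (A.2 = t ∧ e.un A.1 d),
         fun f d₁ d₂ => ((t ++ [false]) <+: f.2 ∧ E₁.bin f d₁ d₂) ∨
                    ((t ++ [true]) <+: f.2 ∧ E₂.bin f d₁ d₂) ∨
                    (f.2 = t ∧ e.bin f.1 d₁ d₂),
         e.var⟩, rfl, ?_, ?_, ?_⟩
      · intro A d; simp [hnt]
      · intro f d₁ d₂; simp [hnt]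
      · -- the translated formula is satisfied
        set E : Env (TSym 𝒜) (TSym ℱ) ℕ D :=
          ⟨fun A d => ((t ++ [false]) <+: A.2 ∧ E₁.un A d) ∨
                    ((t ++ [true]) <+: A.2 ∧ E₂.un A d) ∨
                    (A.2 = t ∧ e.un A.1 d),
           fun f d₁ d₂ => ((t ++ [false]) <+: f.2 ∧ E₁.bin f d₁ d₂) ∨
                    ((t ++ [true]) <+: f.2 ∧ E₂.bin f d₁ d₂) ∨
                    (f.2 = t ∧ e.bin f.1 d₁ d₂),
           e.var⟩ with hEdef
        have agree1un : ∀ A : TSym 𝒜, (t ++ [false]) <+: A.2 →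
            ∀ d, E.un A d ↔ E₁.un A d := by
          intro A hA d
          have h2 : ¬((t ++ [true]) <+: A.2) := hne _ _ _ (by simp) hA
          have h3 : A.2 ≠ t := fun h => hnt false (h ▸ hA)
          simp [hEdef, hA, h2, h3]
        have agree1bin : ∀ f : TSym ℱ, (t ++ [false]) <+: f.2 →
            ∀ d₁ d₂, E.bin f d₁ d₂ ↔ E₁.bin f d₁ d₂ := by
          intro f hf d₁ d₂
          have h2 : ¬((t ++ [true]) <+: f.2) := hne _ _ _ (by simp) hf
          have h3 : f.2 ≠ t := fun h => hnt false (h ▸ hf)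
          simp [hEdef, hf, h2, h3]
        have agree2un : ∀ A : TSym 𝒜, (t ++ [true]) <+: A.2 →
            ∀ d, E.un A d ↔ E₂.un A d := by
          intro A hA d
          have h2 : ¬((t ++ [false]) <+: A.2) := hne _ _ _ (by simp) hA
          have h3 : A.2 ≠ t := fun h => hnt true (h ▸ hA)
          simp [hEdef, hA, h2, h3]
        have agree2bin : ∀ f : TSym ℱ, (t ++ [true]) <+: f.2 →
            ∀ d₁ d₂, E.bin f d₁ d₂ ↔ E₂.bin f d₁ d₂ := by
          intro f hf d₁ d₂
          have h2 : ¬((t ++ [false]) <+: f.2) := hne _ _ _ (by simp) hf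
          have h3 : f.2 ≠ t := fun h => hnt true (h ▸ hf)
          simp [hEdef, hf, h2, h3]
        have eAt : ∀ (A : 𝒜) d, E.un (A, t) d ↔ e.un A d := by
          intro A d; simp [hEdef, hnt]
        have eA1 : ∀ (A : 𝒜) d, E.un (A, t ++ [false]) d ↔ e₁.un A d := fun A d =>
          (agree1un (A, t ++ [false]) (List.prefix_refl _) d).trans (hE₁un A d)
        have eA2 : ∀ (A : 𝒜) d, E.un (A, t ++ [true]) d ↔ e₂.un A d := fun A d =>
          (agree2un (A, t ++ [true]) (List.prefix_refl _) d).trans (hE₂un A d)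
        have eft : ∀ (f : ℱ) d₁ d₂, E.bin (f, t) d₁ d₂ ↔ e.bin f d₁ d₂ := by
          intro f d₁ d₂; simp [hEdef, hnt]
        have ef1 : ∀ (f : ℱ) d₁ d₂, E.bin (f, t ++ [false]) d₁ d₂ ↔ e₁.bin f d₁ d₂ :=
          fun f d₁ d₂ =>
          (agree1bin (f, t ++ [false]) (List.prefix_refl _) d₁ d₂).trans (hE₁bin f d₁ d₂)
        have ef2 : ∀ (f : ℱ) d₁ d₂, E.bin (f, t ++ [true]) d₁ d₂ ↔ e₂.bin f d₁ d₂ :=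
          fun f d₁ d₂ =>
          (agree2bin (f, t ++ [true]) (List.prefix_refl _) d₁ d₂).trans (hE₂bin f d₁ d₂)
        refine ⟨?_, ?_, ?_, ?_⟩
        · refine (sat_listConj _ _).2 fun F' hF' => ?_
          obtain ⟨A, -, rfl⟩ := List.mem_map.1 hF'
          refine (sat_split1 _ _ _ _).2 fun d => ?_
          constructor
          · rw [eAt, eA1, eA2]; exact (hun12 A d).1
          · rw [eA1, eA2]; exact (hun12 A d).2
        · refine (sat_listConj _ _).2 fun F' hF' => ?_
          obtain ⟨f, -, rfl⟩ := List.mem_map.1 hF'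
          refine (sat_split2 _ _ _ _).2 fun d₁ d₂ => ?_
          constructor
          · rw [eft, ef1, ef2]; exact (hbin12 f d₁ d₂).1
          · rw [ef1, ef2]; exact (hbin12 f d₁ d₂).2
        · exact (sat_congr (symP_hatAux F (t ++ [false])) agree1un agree1bin
            (hE₁v.trans hv1).symm).2 hE₁
        · exact (sat_congr (symP_hatAux G (t ++ [true])) agree2un agree2bin
            (hE₂v.trans hv2).symm).2 hE₂

end Aux

/-- **Satisfiability of interesting formulas reduces to
first-order satisfiability.** For every interesting formula `F` there is a
first-order formula `F̂` in the extended vocabulary — obtained by recursively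
replacing each subformula `G₁ ⋆ G₂` with `btr(G₁ ⋆ G₂)` using fresh copies of
the predicate symbols — such that `F` is satisfiable iff `F̂` is satisfiable
(over finite nonempty domains). -/
theorem interesting_equisatisfiable {𝒜 ℱ : Type}
    [Fintype 𝒜] [DecidableEq 𝒜] [Fintype ℱ] [DecidableEq ℱ]
    (F : IFml 𝒜 ℱ ℕ) :
    (∃ (D : Type) (_ : Finite D) (_ : Nonempty D) (e : Env 𝒜 ℱ ℕ D),
        F.Sat e) ↔
    (∃ (D : Type) (_ : Finite D) (_ : Nonempty D)
        (e : Env (TSym 𝒜) (TSym ℱ) ℕ D),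
        (hatAux [] F).Sat e) := by
  constructor
  · rintro ⟨D, fin, ne, e, h⟩
    haveI := fin
    obtain ⟨E, -, -, -, hE⟩ := hatAux_backward F [] e h
    exact ⟨D, fin, ne, E, hE⟩
  · rintro ⟨D, fin, ne, E, hE⟩
    haveI := fin
    exact ⟨D, fin, ne, projEnv [] E, hatAux_forward F [] E hE⟩
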